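/- N(5, 3) = 11; that is, 11 is the minimum length n for which there exists a binary linear code of length n with minimum Hamming distance at least 5 and dual distance at least 3. The value is attained by the [11,4] code spanned by the rows of the generator matrix G = [[1,0,0,0,0,0,0,1,1,1,1],[0,1,0,0,0,1,1,0,0,1,1],[0,0,1,0,1,0,1,0,1,0,1],[0,0,0,1,1,1,0,1,0,1,0]]. -/

import Mathlib

/-- The dual code of a binary linear code `C ⊆ GF(2)^n`. -/
def dualCode {n : ℕ} (C : Submodule (ZMod 2) (Fin n → ZMod 2)) :
    Submodule (ZMod 2) (Fin n → ZMod 2) where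
  carrier := {u | ∀ v ∈ C, dotProduct u v = 0}
  zero_mem' := by intro v _; simp
  add_mem' := by
    intro a b ha hb v hv
    rw [Set.mem_setOf_eq] at *
    rw [add_dotProduct, ha v hv, hb v hv, add_zero]
  smul_mem' := by
    intro c u hu v hv
    rw [Set.mem_setOf_eq] at *
    rw [smul_dotProduct, hu v hv, smul_zero]

/-- The minimum Hamming distance of the code `C` is at least `d`. -/
def MinDistGE {n : ℕ} (C : Submodule (ZMod 2) (Fin n → ZMod 2)) (d : ℕ) : Prop :=
  ∀ c ∈ C, c ≠ 0 → d ≤ hammingNorm c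

/-- `N d d⊥` is the minimum length `n` for which there exists a binary linear code of
length `n` (a subspace `C` of `GF(2)^n` with `0 < dim C < n`) with minimum Hamming
distance at least `d` and dual distance at least `d⊥`. -/
noncomputable def N (d dp : ℕ) : ℕ :=
  sInf {n | ∃ C : Submodule (ZMod 2) (Fin n → ZMod 2),
    0 < Module.finrank (ZMod 2) C ∧ Module.finrank (ZMod 2) C < n ∧
    MinDistGE C d ∧ MinDistGE (dualCode C) dp}

set_option linter.unusedSectionVars false
set_option linter.unusedVariables false

open Finset Module

namespace NProof

lemma z2 (a : ZMod 2) (h : a ≠ 0) : a = 1 := by revert a h; decide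

lemma z2add (a : ZMod 2) : a + a = 0 := by revert a; decide

variable {ι : Type*} [Fintype ι] [DecidableEq ι]

lemma pi_add_self (c : ι → ZMod 2) : c + c = 0 := funext fun j => z2add (c j)

lemma half (D : Submodule (ZMod 2) (ι → ZMod 2)) [DecidablePred (· ∈ D)] (j : ι) :
    2 * ((univ.filter (fun c : ι → ZMod 2 => c ∈ D)).filter (fun c => c j ≠ 0)).card
      ≤ (univ.filter (fun c : ι → ZMod 2 => c ∈ D)).card := by
  set DS := univ.filter (fun c : ι → ZMod 2 => c ∈ D) with hDS
  by_cases hA : (DS.filter (fun c => c j ≠ 0)).Nonempty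
  · obtain ⟨c₀, hc₀⟩ := hA
    rw [mem_filter] at hc₀
    obtain ⟨hc₀DS, hc₀j⟩ := hc₀
    rw [hDS, mem_filter] at hc₀DS
    have hc₀D : c₀ ∈ D := hc₀DS.2
    have key : (DS.filter (fun c => c j ≠ 0)).card
        = (DS.filter (fun c => ¬ c j ≠ 0)).card := by
      apply Finset.card_bij (fun c _ => c + c₀)
      · intro c hc
        rw [mem_filter] at hc ⊢
        rw [hDS, mem_filter] at hc ⊢
        refine ⟨⟨mem_univ _, D.add_mem hc.1.2 hc₀D⟩, ?_⟩
        have := z2 _ hc.2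
        have h0 := z2 _ hc₀j
        simp only [Pi.add_apply, this, h0, not_not]
        decide
      · intro a _ b _ hab
        have h2 : a + c₀ + c₀ = b + c₀ + c₀ := by rw [hab]
        rwa [add_assoc, pi_add_self (c := c₀), add_zero, add_assoc,
          pi_add_self (c := c₀), add_zero] at h2
      · intro b hb
        rw [mem_filter] at hb
        rw [hDS, mem_filter] at hb
        refine ⟨b + c₀, ?_, ?_⟩
        · rw [mem_filter, hDS, mem_filter]
          refine ⟨⟨mem_univ _, D.add_mem hb.1.2 hc₀D⟩, ?_⟩
          have hb0 : b j = 0 := not_not.mp hb.2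
          have h0 := z2 _ hc₀j
          simp only [Pi.add_apply, hb0, h0]
          decide
        · rw [add_assoc, pi_add_self, add_zero]
    have hsplit := Finset.card_filter_add_card_filter_not
      (s := DS) (p := fun c => c j ≠ 0)
    apply le_of_eq
    calc 2 * (DS.filter (fun c => c j ≠ 0)).card
        = (DS.filter (fun c => c j ≠ 0)).card + (DS.filter (fun c => c j ≠ 0)).card :=
          two_mul _
      _ = (DS.filter (fun c => c j ≠ 0)).card + (DS.filter (fun c => ¬ c j ≠ 0)).card := by
          rw [key]
      _ = DS.card := hsplit
  · rw [Finset.not_nonempty_iff_eq_empty] at hA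
    rw [hA]
    simp

lemma plotkin (D : Submodule (ZMod 2) (ι → ZMod 2)) [DecidablePred (· ∈ D)] :
    2 * ∑ c ∈ univ.filter (fun c : ι → ZMod 2 => c ∈ D), hammingNorm c
      ≤ Fintype.card ι * (univ.filter (fun c : ι → ZMod 2 => c ∈ D)).card := by
  set DS := univ.filter (fun c : ι → ZMod 2 => c ∈ D) with hDS
  have hswap : ∑ c ∈ DS, hammingNorm c
      = ∑ j : ι, (DS.filter (fun c => c j ≠ 0)).card := by
    have h1 : ∀ c : ι → ZMod 2, hammingNorm c = ∑ j : ι, if c j ≠ 0 then 1 else 0 :=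
      fun c => Finset.card_filter _ _
    rw [Finset.sum_congr rfl (fun c _ => h1 c), Finset.sum_comm]
    exact Finset.sum_congr rfl (fun j _ => (Finset.card_filter _ _).symm)
  rw [hswap, Finset.mul_sum]
  calc ∑ j : ι, 2 * (DS.filter (fun c => c j ≠ 0)).card
      ≤ ∑ _j : ι, DS.card := Finset.sum_le_sum (fun j _ => half D j)
    _ = Fintype.card ι * DS.card := by rw [Finset.sum_const, smul_eq_mul, Finset.card_univ]

lemma minsum (D : Submodule (ZMod 2) (ι → ZMod 2)) [DecidablePred (· ∈ D)] (d : ℕ)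
    (h : ∀ c ∈ D, c ≠ (0 : ι → ZMod 2) → d ≤ hammingNorm c) :
    d * ((univ.filter (fun c : ι → ZMod 2 => c ∈ D)).card - 1)
      ≤ ∑ c ∈ univ.filter (fun c : ι → ZMod 2 => c ∈ D), hammingNorm c := by
  set DS := univ.filter (fun c : ι → ZMod 2 => c ∈ D) with hDS
  have h0 : (0 : ι → ZMod 2) ∈ DS := by
    rw [hDS, mem_filter]; exact ⟨mem_univ _, D.zero_mem⟩
  have hcard : (DS.erase 0).card = DS.card - 1 := Finset.card_erase_of_mem h0
  have hle : (DS.erase 0).card * d ≤ ∑ c ∈ DS.erase 0, hammingNorm c := by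
    have := Finset.card_nsmul_le_sum (DS.erase 0) hammingNorm d ?_
    · simpa [smul_eq_mul] using this
    · intro c hc
      rw [Finset.mem_erase, hDS, mem_filter] at hc
      exact h c hc.2.2 hc.1
  calc d * (DS.card - 1) = (DS.erase 0).card * d := by rw [hcard, mul_comm]
    _ ≤ ∑ c ∈ DS.erase 0, hammingNorm c := hle
    _ ≤ ∑ c ∈ DS, hammingNorm c :=
        Finset.sum_le_sum_of_subset (Finset.erase_subset _ _)

lemma cardDS (D : Submodule (ZMod 2) (ι → ZMod 2)) [DecidablePred (· ∈ D)] :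
    (univ.filter (fun c : ι → ZMod 2 => c ∈ D)).card = 2 ^ finrank (ZMod 2) D := by
  have h1 : (univ.filter (fun c : ι → ZMod 2 => c ∈ D)).card
      = Fintype.card {c : ι → ZMod 2 // c ∈ D} := (Fintype.card_subtype _).symm
  rw [h1]
  have h2 : Fintype.card {c : ι → ZMod 2 // c ∈ D}
      = Fintype.card (ZMod 2) ^ finrank (ZMod 2) D := card_eq_pow_finrank
  rw [h2, ZMod.card]
lemma wt_le_card (c : ι → ZMod 2) : hammingNorm c ≤ Fintype.card ι := by
  rw [← Finset.card_univ]
  exact Finset.card_filter_le _ _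

lemma colA {n : ℕ} (C : Submodule (ZMod 2) (Fin n → ZMod 2))
    (h3 : MinDistGE (dualCode C) 3) (j : Fin n) : ∃ c ∈ C, c j ≠ 0 := by
  by_contra hcon
  push_neg at hcon
  have hmem : Pi.single j (1 : ZMod 2) ∈ dualCode C := by
    intro v hv
    rw [single_dotProduct, one_mul, hcon v hv]
  have hne : (Pi.single j (1 : ZMod 2) : Fin n → ZMod 2) ≠ 0 := by
    intro h
    have := congrFun h j
    rw [Pi.single_eq_same] at this
    exact one_ne_zero this
  have h3' := h3 _ hmem hne
  have hle : hammingNorm (Pi.single j (1 : ZMod 2) : Fin n → ZMod 2) ≤ 1 := by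
    have hsub : (univ.filter (fun i => (Pi.single j (1 : ZMod 2) : Fin n → ZMod 2) i ≠ 0)) ⊆ {j} := by
      intro i hi
      rw [mem_filter] at hi
      rw [Finset.mem_singleton]
      by_contra hij
      exact hi.2 (Pi.single_eq_of_ne hij 1)
    calc hammingNorm (Pi.single j (1 : ZMod 2) : Fin n → ZMod 2)
        ≤ ({j} : Finset (Fin n)).card := Finset.card_le_card hsub
      _ = 1 := Finset.card_singleton j
  omega

lemma colB {n : ℕ} (C : Submodule (ZMod 2) (Fin n → ZMod 2))
    (h3 : MinDistGE (dualCode C) 3) (j₁ j₂ : Fin n) (hjj : j₁ ≠ j₂) :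
    ∃ c ∈ C, c j₁ ≠ c j₂ := by
  by_contra hcon
  push_neg at hcon
  set u : Fin n → ZMod 2 := Pi.single j₁ 1 + Pi.single j₂ 1 with hu
  have hmem : u ∈ dualCode C := by
    intro v hv
    rw [hu, add_dotProduct, single_dotProduct, single_dotProduct,
      one_mul, one_mul, hcon v hv]
    exact z2add _
  have hne : u ≠ 0 := by
    intro h
    have := congrFun h j₁
    rw [hu, Pi.add_apply, Pi.single_eq_same, Pi.single_eq_of_ne hjj,
      add_zero] at this
    exact one_ne_zero this
  have h3' := h3 _ hmem hne
  have hle : hammingNorm u ≤ 2 := by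
    have hsub : (univ.filter (fun i => u i ≠ 0)) ⊆ {j₁, j₂} := by
      intro i hi
      rw [mem_filter] at hi
      rw [Finset.mem_insert, Finset.mem_singleton]
      by_contra hij
      push_neg at hij
      apply hi.2
      rw [hu, Pi.add_apply, Pi.single_eq_of_ne hij.1, Pi.single_eq_of_ne hij.2, add_zero]
    calc hammingNorm u ≤ ({j₁, j₂} : Finset (Fin n)).card := Finset.card_le_card hsub
      _ ≤ 2 := Finset.card_insert_le _ _ |>.trans (by simp)
  omega

lemma colbound {n : ℕ} (C : Submodule (ZMod 2) (Fin n → ZMod 2))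
    (hA : ∀ j, ∃ c ∈ C, c j ≠ 0)
    (hB : ∀ j₁ j₂ : Fin n, j₁ ≠ j₂ → ∃ c ∈ C, c j₁ ≠ c j₂) :
    n + 1 ≤ 2 ^ finrank (ZMod 2) C := by
  classical
  set k := finrank (ZMod 2) C with hk
  let b : Basis (Fin k) (ZMod 2) C := Module.finBasis (ZMod 2) C
  have heval : ∀ (c : Fin n → ZMod 2) (hc : c ∈ C) (j : Fin n),
      c j = ∑ i, b.repr ⟨c, hc⟩ i * ((b i : Fin n → ZMod 2) j) := by
    intro c hc j
    have h0 : c = ((⟨c, hc⟩ : C) : Fin n → ZMod 2) := rfl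
    conv_lhs => rw [h0, ← b.sum_repr ⟨c, hc⟩]
    rw [AddSubmonoidClass.coe_finset_sum, Finset.sum_apply]
    simp [smul_eq_mul]
  let φ : Fin n → {v : Fin k → ZMod 2 // v ≠ 0} := fun j =>
    ⟨fun i => (b i : Fin n → ZMod 2) j, by
      intro h0
      obtain ⟨c, hcC, hcj⟩ := hA j
      apply hcj
      rw [heval c hcC j]
      refine Finset.sum_eq_zero fun i _ => ?_
      rw [show (b i : Fin n → ZMod 2) j = 0 from congrFun h0 i, mul_zero]⟩
  have hinj : Function.Injective φ := by
    intro j₁ j₂ hj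
    by_contra hne
    obtain ⟨c, hcC, hcj⟩ := hB j₁ j₂ hne
    apply hcj
    rw [heval c hcC j₁, heval c hcC j₂]
    refine Finset.sum_congr rfl fun i _ => ?_
    have : (b i : Fin n → ZMod 2) j₁ = (b i : Fin n → ZMod 2) j₂ :=
      congrFun (congrArg Subtype.val hj) i
    rw [this]
  have hcard := Fintype.card_le_of_injective φ hinj
  rw [Fintype.card_fin] at hcard
  have h1 : Fintype.card {v : Fin k → ZMod 2 // v ≠ 0}
      = Fintype.card (Fin k → ZMod 2) - 1 := by
    have h0 := Fintype.card_subtype_compl (fun v : Fin k → ZMod 2 => v = 0)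
    rw [Fintype.card_subtype_eq] at h0
    exact h0
  have h2 : Fintype.card (Fin k → ZMod 2) = 2 ^ k := by
    rw [Fintype.card_fun, ZMod.card, Fintype.card_fin]
  have hpos : 0 < 2 ^ k := Nat.pow_pos (by norm_num)
  omega

lemma exists_nonzero {n : ℕ} (C : Submodule (ZMod 2) (Fin n → ZMod 2))
    (h1 : 0 < finrank (ZMod 2) C) : ∃ c ∈ C, c ≠ (0 : Fin n → ZMod 2) := by
  have : Nontrivial C := Module.nontrivial_of_finrank_pos h1
  obtain ⟨c, hc⟩ := exists_ne (0 : C)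
  exact ⟨(c : Fin n → ZMod 2), c.2, by
    intro h; exact hc (Subtype.ext h)⟩
lemma ite_identity (a b : ZMod 2) :
    ((if a ≠ 0 then 1 else 0) + (if a + b ≠ 0 then 1 else 0) : ℕ)
      = (if b ≠ 0 then 1 else 0) + 2 * (if b = 0 ∧ a ≠ 0 then 1 else 0) := by
  revert a b; decide

lemma residual {n : ℕ} (C : Submodule (ZMod 2) (Fin n → ZMod 2)) (h5 : MinDistGE C 5)
    (x : Fin n → ZMod 2) (hxC : x ∈ C) (hx0 : x ≠ 0) (hwt : hammingNorm x = 5)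
    (hk : 4 ≤ finrank (ZMod 2) C) (hn : n ≤ 10) : False := by
  classical
  -- the index type of the residual code
  set ι' := {j : Fin n // x j = 0} with hι'
  -- the restriction linear map
  let f : C →ₗ[ZMod 2] (ι' → ZMod 2) :=
    { toFun := fun c j => (c : Fin n → ZMod 2) j.1
      map_add' := fun a b => rfl
      map_smul' := fun m a => rfl }
  set D := LinearMap.range f with hD
  -- weight identity
  have hwt_split : ∀ c : Fin n → ZMod 2,
      hammingNorm c + hammingNorm (c + x)
        = 5 + 2 * (univ.filter (fun j => x j = 0 ∧ c j ≠ 0)).card := by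
    intro c
    have e1 : hammingNorm c = ∑ j : Fin n, if c j ≠ 0 then 1 else 0 :=
      Finset.card_filter _ _
    have e2 : hammingNorm (c + x) = ∑ j : Fin n, if (c + x) j ≠ 0 then 1 else 0 :=
      Finset.card_filter _ _
    have e3 : hammingNorm x = ∑ j : Fin n, if x j ≠ 0 then 1 else 0 :=
      Finset.card_filter _ _
    have e4 : (univ.filter (fun j => x j = 0 ∧ c j ≠ 0)).card
        = ∑ j : Fin n, if x j = 0 ∧ c j ≠ 0 then 1 else 0 := Finset.card_filter _ _
    rw [e1, e2, e4, ← Finset.sum_add_distrib]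
    have h5eq : (5 : ℕ) = ∑ j : Fin n, if x j ≠ 0 then 1 else 0 := by rw [← e3, hwt]
    rw [h5eq, Finset.mul_sum, ← Finset.sum_add_distrib]
    exact Finset.sum_congr rfl (fun j _ => by
      rw [Pi.add_apply]; exact ite_identity (c j) (x j))
  -- hamming norm of f c
  have hwt_f : ∀ c : C, hammingNorm (f c)
      = (univ.filter (fun j => x j = 0 ∧ (c : Fin n → ZMod 2) j ≠ 0)).card := by
    intro c
    apply Finset.card_bij (fun (j : ι') _ => j.1)
    · intro j hj
      rw [mem_filter] at hj ⊢
      exact ⟨mem_univ _, j.2, hj.2⟩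
    · intro a _ b _ hab
      exact Subtype.ext hab
    · intro j hj
      rw [mem_filter] at hj
      exact ⟨⟨j, hj.2.1⟩, by rw [mem_filter]; exact ⟨mem_univ _, hj.2.2⟩, rfl⟩
  -- kernel is the span of x
  have hxC' : (⟨x, hxC⟩ : C) ≠ 0 := by
    intro h; exact hx0 (congrArg Subtype.val h)
  have hker : LinearMap.ker f = Submodule.span (ZMod 2) {(⟨x, hxC⟩ : C)} := by
    apply le_antisymm
    · intro c hc
      rw [LinearMap.mem_ker] at hc
      have hzero : ∀ j : Fin n, x j = 0 → (c : Fin n → ZMod 2) j = 0 := by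
        intro j hj
        exact congrFun hc ⟨j, hj⟩
      by_cases hc0 : (c : Fin n → ZMod 2) = 0
      · have : c = 0 := Subtype.ext hc0
        rw [this]; exact Submodule.zero_mem _
      · have hge : 5 ≤ hammingNorm (c : Fin n → ZMod 2) := h5 _ c.2 hc0
        have hsub : (univ.filter (fun j => (c : Fin n → ZMod 2) j ≠ 0))
            ⊆ (univ.filter (fun j => x j ≠ 0)) := by
          intro j hj
          rw [mem_filter] at hj ⊢
          refine ⟨mem_univ _, fun h0 => hj.2 (hzero j h0)⟩
        have heq : (univ.filter (fun j => x j ≠ 0))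
            = (univ.filter (fun j => (c : Fin n → ZMod 2) j ≠ 0)) := by
          apply (Finset.eq_of_subset_of_card_le hsub ?_).symm
          have h1 : (univ.filter (fun j => x j ≠ 0)).card = 5 := hwt
          have h2 : 5 ≤ (univ.filter (fun j => (c : Fin n → ZMod 2) j ≠ 0)).card := hge
          omega
        have hcx : (c : Fin n → ZMod 2) = x := by
          funext j
          by_cases hcj : (c : Fin n → ZMod 2) j = 0
          · have : ¬ ((c : Fin n → ZMod 2) j ≠ 0) := not_not.mpr hcj
            have hxj : x j = 0 := by
              by_contra hxj
              have : j ∈ univ.filter (fun j => x j ≠ 0) := by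
                rw [mem_filter]; exact ⟨mem_univ _, hxj⟩
              rw [heq, mem_filter] at this
              exact this.2 hcj
            rw [hcj, hxj]
          · have hxj : x j ≠ 0 := by
              have : j ∈ univ.filter (fun j => (c : Fin n → ZMod 2) j ≠ 0) := by
                rw [mem_filter]; exact ⟨mem_univ _, hcj⟩
              rw [← heq, mem_filter] at this
              exact this.2
            rw [z2 _ hcj, z2 _ hxj]
        have : c = ⟨x, hxC⟩ := Subtype.ext hcx
        rw [this]
        exact Submodule.mem_span_singleton_self _
    · rw [Submodule.span_le, Set.singleton_subset_iff]
      show f ⟨x, hxC⟩ = 0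
      funext j
      exact j.2
  have hkerrank : finrank (ZMod 2) (LinearMap.ker f) = 1 := by
    rw [hker]
    exact finrank_span_singleton hxC'
  have hrank : finrank (ZMod 2) D = finrank (ZMod 2) C - 1 := by
    have h0 := f.finrank_range_add_finrank_ker
    rw [hkerrank] at h0
    rw [hD]
    omega
  -- min distance of the residual code is ≥ 3
  have hmin : ∀ y ∈ D, y ≠ (0 : ι' → ZMod 2) → 3 ≤ hammingNorm y := by
    intro y hy hy0
    rw [hD, LinearMap.mem_range] at hy
    obtain ⟨c, rfl⟩ := hy
    have hc0 : (c : Fin n → ZMod 2) ≠ 0 := by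
      intro h
      apply hy0
      have : c = 0 := Subtype.ext h
      rw [this, map_zero]
    have hcx : (c : Fin n → ZMod 2) ≠ x := by
      intro h
      apply hy0
      have : c = ⟨x, hxC⟩ := Subtype.ext h
      rw [this]
      show f ⟨x, hxC⟩ = 0
      funext j
      exact j.2
    have h1 : 5 ≤ hammingNorm (c : Fin n → ZMod 2) := h5 _ c.2 hc0
    have h2 : 5 ≤ hammingNorm ((c : Fin n → ZMod 2) + x) := by
      apply h5 _ (C.add_mem c.2 hxC)
      intro h
      apply hcx
      have h3 : (c : Fin n → ZMod 2) + x + x = x := by rw [h, zero_add]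
      rwa [add_assoc, pi_add_self, add_zero] at h3
    have hsplit := hwt_split (c : Fin n → ZMod 2)
    have hfy := hwt_f c
    omega
  -- Plotkin on the residual code
  haveI : DecidablePred (· ∈ D) := Classical.decPred _
  have hplot := plotkin D
  have hmins := minsum D 3 hmin
  have hcard := cardDS D
  have hcardι5 : Fintype.card ι' ≤ 5 := by
    have hc2 : Fintype.card ι' = (univ.filter (fun j : Fin n => x j = 0)).card :=
      Fintype.card_subtype _
    have hsplit := Finset.card_filter_add_card_filter_not
      (s := (univ : Finset (Fin n))) (p := fun j : Fin n => x j = 0)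
    have hwt' : (univ.filter (fun j : Fin n => ¬ x j = 0)).card = 5 := hwt
    have hcu : (univ : Finset (Fin n)).card = n := Finset.card_univ.trans (Fintype.card_fin n)
    omega
  -- final contradiction
  have hm : 3 ≤ finrank (ZMod 2) D := by omega
  have hpow : 8 ≤ 2 ^ finrank (ZMod 2) D := by
    calc (8 : ℕ) = 2 ^ 3 := rfl
      _ ≤ 2 ^ finrank (ZMod 2) D := Nat.pow_le_pow_right (by norm_num) hm
  have hstep : Fintype.card ι' * (univ.filter (fun c : ι' → ZMod 2 => c ∈ D)).card
      ≤ 5 * (univ.filter (fun c : ι' → ZMod 2 => c ∈ D)).card :=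
    Nat.mul_le_mul_right _ hcardι5
  have hA2 : 2 * ∑ c ∈ univ.filter (fun c : ι' → ZMod 2 => c ∈ D), hammingNorm c
      ≤ 5 * (univ.filter (fun c : ι' → ZMod 2 => c ∈ D)).card := le_trans hplot hstep
  omega
lemma no_code {n : ℕ} (hn : n ≤ 10) (C : Submodule (ZMod 2) (Fin n → ZMod 2))
    (h1 : 0 < finrank (ZMod 2) C) (h2 : finrank (ZMod 2) C < n)
    (h5 : MinDistGE C 5) (h3 : MinDistGE (dualCode C) 3) : False := by
  classical
  haveI : DecidablePred (· ∈ C) := Classical.decPred _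
  have hA := colA C h3
  have hB := colB C h3
  have hcb := colbound C hA hB
  obtain ⟨c₀, hc₀C, hc₀⟩ := exists_nonzero C h1
  have h5n : 5 ≤ n := le_trans (h5 c₀ hc₀C hc₀)
    (le_trans (wt_le_card c₀) (le_of_eq (Fintype.card_fin n)))
  have hplot := plotkin C
  have hmins := minsum C 5 h5
  have hcard := cardDS C
  rw [Fintype.card_fin] at hplot
  by_cases hk4 : 4 ≤ finrank (ZMod 2) C
  · have hpow16 : 16 ≤ 2 ^ finrank (ZMod 2) C := by
      calc (16 : ℕ) = 2 ^ 4 := rfl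
        _ ≤ 2 ^ finrank (ZMod 2) C := Nat.pow_le_pow_right (by norm_num) hk4
    have h10 : 2 * ∑ c ∈ univ.filter (fun c : Fin n → ZMod 2 => c ∈ C), hammingNorm c
        ≤ 10 * (univ.filter (fun c : Fin n → ZMod 2 => c ∈ C)).card :=
      le_trans hplot (Nat.mul_le_mul_right _ hn)
    have hx : ∃ x ∈ C, x ≠ (0 : Fin n → ZMod 2) ∧ hammingNorm x = 5 := by
      by_contra h
      push_neg at h
      have h6 : ∀ c ∈ C, c ≠ (0 : Fin n → ZMod 2) → 6 ≤ hammingNorm c := by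
        intro c hcC hcne
        have ha := h5 c hcC hcne
        have hb := h c hcC hcne
        omega
      have hm6 := minsum C 6 h6
      omega
    obtain ⟨x, hxC, hx0, hwt5⟩ := hx
    exact residual C h5 x hxC hx0 hwt5 hk4 hn
  · push_neg at hk4
    by_cases hk2 : finrank (ZMod 2) C ≤ 2
    · have hple : 2 ^ finrank (ZMod 2) C ≤ 4 := by
        calc 2 ^ finrank (ZMod 2) C ≤ 2 ^ 2 := Nat.pow_le_pow_right (by norm_num) hk2
          _ = 4 := rfl
      omega
    · have hk3 : finrank (ZMod 2) C = 3 := by omega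
      rw [hk3] at hcard hcb
      norm_num at hcard hcb
      rw [hcard] at hplot hmins
      omega
section Witness

set_option maxRecDepth 10000

def Gmat : Matrix (Fin 4) (Fin 11) (ZMod 2) :=
  !![1,0,0,0,0,0,0,1,1,1,1;
     0,1,0,0,0,1,1,0,0,1,1;
     0,0,1,0,1,0,1,0,1,0,1;
     0,0,0,1,1,1,0,1,0,1,0]

lemma G_indep : ∀ a : Fin 4 → ZMod 2, (∑ i, a i • Gmat i) = 0 → a = 0 := by decide

lemma G_wt : ∀ a : Fin 4 → ZMod 2, (∑ i, a i • Gmat i) ≠ 0 →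
    5 ≤ hammingNorm (∑ i, a i • Gmat i) := by decide

lemma G_cols_ne : ∀ j : Fin 11, ∃ i, Gmat i j ≠ 0 := by decide

lemma G_cols_distinct : ∀ j₁ j₂ : Fin 11, j₁ ≠ j₂ → ∃ i, Gmat i j₁ ≠ Gmat i j₂ := by decide

lemma good_code :
    let C : Submodule (ZMod 2) (Fin 11 → ZMod 2) :=
      Submodule.span (ZMod 2) (Set.range fun i => Gmat i)
    0 < Module.finrank (ZMod 2) C ∧ Module.finrank (ZMod 2) C < 11 ∧
      MinDistGE C 5 ∧ MinDistGE (dualCode C) 3 := by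
  intro C
  have hind : LinearIndependent (ZMod 2) (fun i => Gmat i) := by
    rw [Fintype.linearIndependent_iff]
    intro g hg
    have := G_indep g hg
    intro i
    rw [this]
    rfl
  have hrank : Module.finrank (ZMod 2) C = 4 := by
    have := finrank_span_eq_card (R := ZMod 2) hind
    rw [this, Fintype.card_fin]
  have hmin5 : MinDistGE C 5 := by
    intro c hc hc0
    rw [Submodule.mem_span_range_iff_exists_fun] at hc
    obtain ⟨a, rfl⟩ := hc
    exact G_wt a hc0
  refine ⟨by omega, by omega, hmin5, ?_⟩
  intro u hu hu0
  by_contra hlt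
  push_neg at hlt
  -- u is orthogonal to every row of G
  have hrows : ∀ i : Fin 4, dotProduct u (Gmat i) = 0 := by
    intro i
    exact hu (Gmat i) (Submodule.subset_span ⟨i, rfl⟩)
  -- support of u
  set T := univ.filter (fun j : Fin 11 => u j ≠ 0) with hT
  have hTcard : T.card ≤ 2 := by
    have : hammingNorm u ≤ 2 := by omega
    exact this
  have hTne : T.Nonempty := by
    rw [Finset.filter_nonempty_iff]
    by_contra h
    push_neg at h
    apply hu0
    funext j
    exact h j (mem_univ j)
  have hdot : ∀ i : Fin 4, ∑ j ∈ T, Gmat i j = 0 := by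
    intro i
    have h1 : dotProduct u (Gmat i) = ∑ j ∈ T, u j * Gmat i j := by
      refine (Finset.sum_subset (Finset.filter_subset (fun j : Fin 11 => u j ≠ 0) univ) ?_).symm
      intro j _ hj
      rw [mem_filter, not_and, not_not] at hj
      rw [hj (mem_univ j), zero_mul]
    have h2 : ∑ j ∈ T, u j * Gmat i j = ∑ j ∈ T, Gmat i j := by
      apply Finset.sum_congr rfl
      intro j hj
      rw [hT, mem_filter] at hj
      rw [z2 _ hj.2, one_mul]
    rw [← h2, ← h1, hrows i]
  interval_cases hc : T.card
  · exact Finset.Nonempty.card_pos hTne |>.ne' hc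
  · obtain ⟨j, hj⟩ := Finset.card_eq_one.mp hc
    obtain ⟨i, hi⟩ := G_cols_ne j
    apply hi
    have := hdot i
    rwa [hj, Finset.sum_singleton] at this
  · obtain ⟨j₁, j₂, hj12, hj⟩ := Finset.card_eq_two.mp hc
    obtain ⟨i, hi⟩ := G_cols_distinct j₁ j₂ hj12
    apply hi
    have := hdot i
    rw [hj, Finset.sum_pair hj12] at this
    have hz : ∀ a b : ZMod 2, a + b = 0 → a = b := by decide
    exact hz _ _ this

end Witness

theorem N_five_three' :
    N 5 3 = 11 ∧
    (let G : Matrix (Fin 4) (Fin 11) (ZMod 2) :=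
      !![1,0,0,0,0,0,0,1,1,1,1;
         0,1,0,0,0,1,1,0,0,1,1;
         0,0,1,0,1,0,1,0,1,0,1;
         0,0,0,1,1,1,0,1,0,1,0];
     let C : Submodule (ZMod 2) (Fin 11 → ZMod 2) :=
       Submodule.span (ZMod 2) (Set.range fun i => G i);
     0 < Module.finrank (ZMod 2) C ∧ Module.finrank (ZMod 2) C < 11 ∧
       MinDistGE C 5 ∧ MinDistGE (dualCode C) 3) := by
  have hgood := good_code
  have hmem : 11 ∈ {n | ∃ C : Submodule (ZMod 2) (Fin n → ZMod 2),
      0 < Module.finrank (ZMod 2) C ∧ Module.finrank (ZMod 2) C < n ∧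
      MinDistGE C 5 ∧ MinDistGE (dualCode C) 3} :=
    ⟨Submodule.span (ZMod 2) (Set.range fun i => Gmat i), hgood⟩
  constructor
  · apply le_antisymm
    · exact Nat.sInf_le hmem
    · apply le_csInf ⟨11, hmem⟩
      intro n hn
      by_contra hlt
      push_neg at hlt
      obtain ⟨C, h1, h2, h5, h3⟩ := hn
      exact no_code (by omega) C h1 h2 h5 h3
  · exact hgood
end NProof


theorem N_five_three :
    N 5 3 = 11 ∧
    (let G : Matrix (Fin 4) (Fin 11) (ZMod 2) :=
      !![1,0,0,0,0,0,0,1,1,1,1;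
         0,1,0,0,0,1,1,0,0,1,1;
         0,0,1,0,1,0,1,0,1,0,1;
         0,0,0,1,1,1,0,1,0,1,0];
     let C : Submodule (ZMod 2) (Fin 11 → ZMod 2) :=
       Submodule.span (ZMod 2) (Set.range fun i => G i);
     0 < Module.finrank (ZMod 2) C ∧ Module.finrank (ZMod 2) C < 11 ∧
       MinDistGE C 5 ∧ MinDistGE (dualCode C) 3) :=
  NProof.N_five_three'
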